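/- arXiv:2310.00229 — 2 statements merged into one kernel-verified Lean document; each statement's English description precedes it below -/
import Mathlib

section
/- (Upper perturbation bound for SMDP value estimates.) Suppose 0 ≤ γ < 1, and (v_k), (γ_k), (v̂_k), (γ̂_k) are sequences with 0 ≤ v_k ≤ v_max(1−γ), 0 ≤ γ_k, γ_k + ε_γ ≤ γ, v̂_k ≤ v_k + ε_v·v_max, and γ̂_k ≤ γ_k + ε_γ, with v̂_k, γ̂_k ≥ 0. Then ∑_{k=0}^∞ v̂_k ∏_{i=0}^{k-1} γ̂_i ≤ ∑_{k=0}^∞ v_k ∏_{i=0}^{k-1} γ_i + ε_v·v_max/(1−γ) + ε_γ·v_max/(1−γ)². -/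
theorem stmt_3 (γ εv εγ vmax : ℝ) (hγ0 : 0 ≤ γ) (hγ1 : γ < 1)
    (hεv : 0 ≤ εv) (hεγ : 0 ≤ εγ) (hvmax : 0 ≤ vmax)
    (v g vh gh : ℕ → ℝ)
    (hv0 : ∀ k, 0 ≤ v k) (hv1 : ∀ k, v k ≤ vmax * (1 - γ))
    (hg0 : ∀ k, 0 ≤ g k) (hg1 : ∀ k, g k + εγ ≤ γ)
    (hvh0 : ∀ k, 0 ≤ vh k) (hvh1 : ∀ k, vh k ≤ v k + εv * vmax)
    (hgh0 : ∀ k, 0 ≤ gh k) (hgh1 : ∀ k, gh k ≤ g k + εγ) :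
    (∑' k : ℕ, vh k * ∏ i ∈ Finset.range k, gh i) ≤
      (∑' k : ℕ, v k * ∏ i ∈ Finset.range k, g i) +
        εv * vmax / (1 - γ) + εγ * vmax / (1 - γ) ^ 2 := by
  have h1γ : 0 < 1 - γ := by linarith
  have hγabs : ‖γ‖ < 1 := by rw [Real.norm_eq_abs, abs_of_nonneg hγ0]; exact hγ1
  have hgγ : ∀ i, g i ≤ γ := fun i => by have := hg1 i; linarith
  have hghγ : ∀ i, gh i ≤ γ := fun i => by have h := hgh1 i; have := hg1 i; linarith
  have hprodg0 : ∀ k, (0:ℝ) ≤ ∏ i ∈ Finset.range k, g i := fun k =>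
    Finset.prod_nonneg fun i _ => hg0 i
  have hprodgh0 : ∀ k, (0:ℝ) ≤ ∏ i ∈ Finset.range k, gh i := fun k =>
    Finset.prod_nonneg fun i _ => hgh0 i
  have hprodg : ∀ k, ∏ i ∈ Finset.range k, g i ≤ γ ^ k := by
    intro k
    calc ∏ i ∈ Finset.range k, g i ≤ ∏ i ∈ Finset.range k, γ :=
          Finset.prod_le_prod (fun i _ => hg0 i) (fun i _ => hgγ i)
      _ = γ ^ k := by simp
  have hprodgh : ∀ k, ∏ i ∈ Finset.range k, gh i ≤ γ ^ k := by
    intro k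
    calc ∏ i ∈ Finset.range k, gh i ≤ ∏ i ∈ Finset.range k, γ :=
          Finset.prod_le_prod (fun i _ => hgh0 i) (fun i _ => hghγ i)
      _ = γ ^ k := by simp
  -- key perturbation bound on products
  have key : ∀ k, ∏ i ∈ Finset.range k, gh i ≤
      ∏ i ∈ Finset.range k, g i + εγ * k * γ ^ (k - 1) := by
    intro k
    induction k with
    | zero => simp
    | succ n ih =>
      rw [Finset.prod_range_succ, Finset.prod_range_succ]
      push_cast [Nat.add_sub_cancel]
      have step1 : (∏ i ∈ Finset.range n, gh i) * gh n ≤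
          (∏ i ∈ Finset.range n, g i + εγ * n * γ ^ (n - 1)) * gh n :=
        mul_le_mul_of_nonneg_right ih (hgh0 n)
      have hpow : (γ ^ (n - 1)) * γ ≤ γ ^ n ∨ (n:ℝ) = 0 := by
        rcases Nat.eq_zero_or_pos n with h | h
        · right; exact_mod_cast congrArg Nat.cast h
        · left
          have : n - 1 + 1 = n := Nat.succ_pred_eq_of_pos h
          rw [← pow_succ, this]
      have hterm : εγ * n * γ ^ (n - 1) * gh n ≤ εγ * n * γ ^ n := by
        rcases hpow with h | h
        · calc εγ * n * γ ^ (n - 1) * gh n ≤ εγ * n * γ ^ (n - 1) * γ := by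
                apply mul_le_mul_of_nonneg_left (hghγ n)
                positivity
            _ = εγ * n * (γ ^ (n - 1) * γ) := by ring
            _ ≤ εγ * n * γ ^ n := by
                apply mul_le_mul_of_nonneg_left h
                positivity
        · rw [h]; ring_nf; simp
      have hmain : (∏ i ∈ Finset.range n, g i) * gh n ≤
          (∏ i ∈ Finset.range n, g i) * g n + εγ * γ ^ n := by
        calc (∏ i ∈ Finset.range n, g i) * gh n ≤
              (∏ i ∈ Finset.range n, g i) * (g n + εγ) :=
              mul_le_mul_of_nonneg_left (hgh1 n) (hprodg0 n)
          _ = (∏ i ∈ Finset.range n, g i) * g n + (∏ i ∈ Finset.range n, g i) * εγ := by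
              ring
          _ ≤ (∏ i ∈ Finset.range n, g i) * g n + εγ * γ ^ n := by
              have := mul_le_mul_of_nonneg_left (hprodg n) hεγ
              linarith [this]
      have : (∏ i ∈ Finset.range n, g i + εγ * n * γ ^ (n - 1)) * gh n =
          (∏ i ∈ Finset.range n, g i) * gh n + εγ * n * γ ^ (n - 1) * gh n := by ring
      have goalpow : εγ * ((n:ℝ) + 1) * γ ^ n = εγ * γ ^ n + εγ * n * γ ^ n := by ring
      calc (∏ i ∈ Finset.range n, gh i) * gh n ≤
            (∏ i ∈ Finset.range n, g i) * gh n + εγ * n * γ ^ (n - 1) * gh n := by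
            rw [this] at step1; exact step1
        _ ≤ (∏ i ∈ Finset.range n, g i) * g n + εγ * γ ^ n + εγ * n * γ ^ n := by
            linarith [hmain, hterm]
        _ = (∏ i ∈ Finset.range n, g i) * g n + εγ * ((n : ℝ) + 1) * γ ^ n := by
            ring
  -- the dominating sequence
  set b : ℕ → ℝ := fun k => v k * ∏ i ∈ Finset.range k, g i +
      (vmax * (1 - γ) * εγ) * ((k : ℝ) * γ ^ (k - 1)) + (εv * vmax) * γ ^ k with hb
  have hab : ∀ k, vh k * ∏ i ∈ Finset.range k, gh i ≤ b k := by
    intro k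
    have h1 : vh k * ∏ i ∈ Finset.range k, gh i ≤
        (v k + εv * vmax) * ∏ i ∈ Finset.range k, gh i :=
      mul_le_mul_of_nonneg_right (hvh1 k) (hprodgh0 k)
    have h2 : v k * ∏ i ∈ Finset.range k, gh i ≤
        v k * (∏ i ∈ Finset.range k, g i + εγ * k * γ ^ (k - 1)) :=
      mul_le_mul_of_nonneg_left (key k) (hv0 k)
    have h3 : v k * (εγ * k * γ ^ (k - 1)) ≤
        (vmax * (1 - γ)) * (εγ * k * γ ^ (k - 1)) := by
      apply mul_le_mul_of_nonneg_right (hv1 k)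
      positivity
    have h4 : (εv * vmax) * ∏ i ∈ Finset.range k, gh i ≤ (εv * vmax) * γ ^ k :=
      mul_le_mul_of_nonneg_left (hprodgh k) (by positivity)
    simp only [hb]
    nlinarith [h1, h2, h3, h4]
  -- summability facts
  have Hg : HasSum (fun k : ℕ => γ ^ k) (1 - γ)⁻¹ := hasSum_geometric_of_lt_one hγ0 hγ1
  have Hn : HasSum (fun n : ℕ => (n : ℝ) * γ ^ n) (γ / (1 - γ) ^ 2) :=
    hasSum_coe_mul_geometric_of_norm_lt_one hγabs
  have Hn1 : HasSum (fun n : ℕ => ((n : ℝ) + 1) * γ ^ n) (γ / (1 - γ) ^ 2 + (1 - γ)⁻¹) := by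
    simpa [add_mul, one_mul] using Hn.add Hg
  have Hf : HasSum (fun k : ℕ => (k : ℝ) * γ ^ (k - 1)) (γ / (1 - γ) ^ 2 + (1 - γ)⁻¹) := by
    have heq : (fun n : ℕ => ((n + 1 : ℕ) : ℝ) * γ ^ ((n + 1) - 1)) =
        fun n : ℕ => ((n : ℝ) + 1) * γ ^ n := by
      funext n; push_cast [Nat.add_sub_cancel]; ring
    have h1 : HasSum (fun n : ℕ => ((n + 1 : ℕ) : ℝ) * γ ^ ((n + 1) - 1))
        (γ / (1 - γ) ^ 2 + (1 - γ)⁻¹) := by rw [heq]; exact Hn1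
    have h2 := (hasSum_nat_add_iff (f := fun k : ℕ => (k : ℝ) * γ ^ (k - 1)) 1).mp h1
    simpa using h2
  have hfval : γ / (1 - γ) ^ 2 + (1 - γ)⁻¹ = 1 / (1 - γ) ^ 2 := by
    field_simp
    ring
  have S1 : Summable (fun k : ℕ => v k * ∏ i ∈ Finset.range k, g i) := by
    apply Summable.of_nonneg_of_le (fun k => mul_nonneg (hv0 k) (hprodg0 k))
      (fun k => ?_) ((Hg.summable).mul_left (vmax * (1 - γ)))
    calc v k * ∏ i ∈ Finset.range k, g i ≤ (vmax * (1 - γ)) * ∏ i ∈ Finset.range k, g i :=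
          mul_le_mul_of_nonneg_right (hv1 k) (hprodg0 k)
      _ ≤ (vmax * (1 - γ)) * γ ^ k := by
          apply mul_le_mul_of_nonneg_left (hprodg k); positivity
  have S2 : Summable (fun k : ℕ => (k : ℝ) * γ ^ (k - 1)) := Hf.summable
  have S3 : Summable (fun k : ℕ => γ ^ k) := Hg.summable
  have Sb : Summable b := by
    apply Summable.add
    apply Summable.add S1 (S2.mul_left _)
    exact S3.mul_left _
  have Sa : Summable (fun k : ℕ => vh k * ∏ i ∈ Finset.range k, gh i) :=
    Summable.of_nonneg_of_le (fun k => mul_nonneg (hvh0 k) (hprodgh0 k)) hab Sb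
  have hts : (∑' k : ℕ, vh k * ∏ i ∈ Finset.range k, gh i) ≤ ∑' k, b k :=
    Summable.tsum_le_tsum hab Sa Sb
  have htb : (∑' k, b k) = (∑' k : ℕ, v k * ∏ i ∈ Finset.range k, g i) +
      (vmax * (1 - γ) * εγ) * (γ / (1 - γ) ^ 2 + (1 - γ)⁻¹) + (εv * vmax) * (1 - γ)⁻¹ := by
    rw [Summable.tsum_add (S1.add (S2.mul_left _)) (S3.mul_left _), Summable.tsum_add S1 (S2.mul_left _),
      tsum_mul_left, tsum_mul_left, Hf.tsum_eq, Hg.tsum_eq]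
  rw [htb] at hts
  refine hts.trans ?_
  rw [hfval]
  have h1 : (εv * vmax) * (1 - γ)⁻¹ = εv * vmax / (1 - γ) := by ring
  have h2 : (vmax * (1 - γ) * εγ) * (1 / (1 - γ) ^ 2) ≤ εγ * vmax / (1 - γ) ^ 2 := by
    have hle : vmax * (1 - γ) * εγ ≤ εγ * vmax := by
      nlinarith [mul_nonneg (mul_nonneg hvmax hεγ) hγ0]
    rw [div_eq_mul_one_div (εγ * vmax) ((1 - γ) ^ 2)]
    exact mul_le_mul_of_nonneg_right hle (by positivity)
  linarith
end

section
/- (Lower perturbation bound for SMDP value estimates.) Under the same hypotheses as the upper bound but with v̂_k ≥ v_k − ε_v·v_max and γ̂_k ≥ γ_k − ε_γ (and v̂_k, γ̂_k ≥ 0), one has ∑_{k=0}^∞ v̂_k ∏_{i=0}^{k-1} γ̂_i ≥ ∑_{k=0}^∞ v_k ∏_{i=0}^{k-1} γ_i − ε_v·v_max/(1−γ) − ε_γ·v_max/(1−γ)². -/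
theorem stmt_4 (γ εv εγ vmax : ℝ) (hγ0 : 0 ≤ γ) (hγ1 : γ < 1)
    (hεv : 0 ≤ εv) (hεγ : 0 ≤ εγ) (hvmax : 0 ≤ vmax)
    (v g vh gh : ℕ → ℝ)
    (hv0 : ∀ k, 0 ≤ v k) (hv1 : ∀ k, v k ≤ vmax * (1 - γ))
    (hg0 : ∀ k, 0 ≤ g k) (hg1 : ∀ k, g k ≤ γ)
    (hvh0 : ∀ k, 0 ≤ vh k) (hvh1 : ∀ k, v k - εv * vmax ≤ vh k)
    (hgh0 : ∀ k, 0 ≤ gh k) (hgh1 : ∀ k, g k - εγ ≤ gh k)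
    (hsum : Summable (fun k : ℕ => vh k * ∏ i ∈ Finset.range k, gh i)) :
    (∑' k : ℕ, v k * ∏ i ∈ Finset.range k, g i) -
        εv * vmax / (1 - γ) - εγ * vmax / (1 - γ) ^ 2 ≤
      ∑' k : ℕ, vh k * ∏ i ∈ Finset.range k, gh i := by
  have h1γ : 0 < 1 - γ := by linarith
  set g' : ℕ → ℝ := fun i => max (g i - εγ) 0 with hg'def
  set v' : ℕ → ℝ := fun k => max (v k - εv * vmax) 0 with hv'def
  have hg'0 : ∀ i, 0 ≤ g' i := fun i => le_max_right _ _
  have hg'γ : ∀ i, g' i ≤ γ := fun i => max_le (by linarith [hg1 i]) hγ0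
  have hg'le : ∀ i, g' i ≤ g i := fun i => max_le (by linarith) (hg0 i)
  have hgdiff : ∀ i, g i - g' i ≤ εγ := fun i => by
    have := le_max_left (g i - εγ) 0
    simp only [hg'def]; linarith
  have hg'gh : ∀ i, g' i ≤ gh i := fun i => max_le (hgh1 i) (hgh0 i)
  have hv'0 : ∀ k, 0 ≤ v' k := fun k => le_max_right _ _
  have hv'le : ∀ k, v' k ≤ v k := fun k => max_le (by nlinarith [hεv, hvmax]) (hv0 k)
  have hv'1 : ∀ k, v' k ≤ vmax * (1 - γ) := fun k => le_trans (hv'le k) (hv1 k)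
  have hvdiff : ∀ k, v k - v' k ≤ εv * vmax := fun k => by
    have := le_max_left (v k - εv * vmax) 0
    simp only [hv'def]; linarith
  have hv'vh : ∀ k, v' k ≤ vh k := fun k => max_le (hvh1 k) (hvh0 k)
  -- products
  set P : ℕ → ℝ := fun k => ∏ i ∈ Finset.range k, g i with hPdef
  set P' : ℕ → ℝ := fun k => ∏ i ∈ Finset.range k, g' i with hP'def
  have hP0 : ∀ k, 0 ≤ P k := fun k => Finset.prod_nonneg fun i _ => hg0 i
  have hP'0 : ∀ k, 0 ≤ P' k := fun k => Finset.prod_nonneg fun i _ => hg'0 i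
  have hPle : ∀ k, P k ≤ γ ^ k := by
    intro k
    have := Finset.prod_le_prod (f := g) (g := fun _ => γ)
      (fun i (_ : i ∈ Finset.range k) => hg0 i) (fun i _ => hg1 i)
    simpa using this
  have hP'P : ∀ k, P' k ≤ P k := fun k =>
    Finset.prod_le_prod (fun i _ => hg'0 i) (fun i _ => hg'le i)
  have hP'le : ∀ k, P' k ≤ γ ^ k := fun k => le_trans (hP'P k) (hPle k)
  -- key: P k - P' k ≤ εγ * D k where D k = k * γ^(k-1)
  set D : ℕ → ℝ := fun k => (k : ℝ) * γ ^ (k - 1) with hDdef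
  have hD0 : ∀ k, 0 ≤ D k := fun k => mul_nonneg (Nat.cast_nonneg k) (pow_nonneg hγ0 _)
  have hDsucc : ∀ k, D k * γ + γ ^ k = D (k + 1) := by
    intro k
    cases k with
    | zero => simp [hDdef]
    | succ n =>
      simp only [hDdef, Nat.add_sub_cancel, Nat.succ_sub_one]
      push_cast
      rw [pow_succ]
      ring
  have hkey : ∀ k, P k - P' k ≤ εγ * D k := by
    intro k
    induction k with
    | zero => simp [hPdef, hP'def, hDdef]
    | succ n ih =>
      have e1 : P (n + 1) = P n * g n := Finset.prod_range_succ g n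
      have e2 : P' (n + 1) = P' n * g' n := Finset.prod_range_succ g' n
      have h1 : (P n - P' n) * g n ≤ εγ * D n * γ :=
        mul_le_mul ih (hg1 n) (hg0 n) (mul_nonneg hεγ (hD0 n))
      have h2 : P' n * (g n - g' n) ≤ γ ^ n * εγ :=
        mul_le_mul (hP'le n) (hgdiff n) (by linarith [hP'P n, hgdiff n, hg'le n]) (pow_nonneg hγ0 n)
      -- careful: g n - g' n may be negative; redo h2
      calc P (n + 1) - P' (n + 1) = (P n - P' n) * g n + P' n * (g n - g' n) := by
            rw [e1, e2]; ring
        _ ≤ εγ * D n * γ + γ ^ n * εγ := by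
            have h2' : P' n * (g n - g' n) ≤ P' n * εγ :=
              mul_le_mul_of_nonneg_left (hgdiff n) (hP'0 n)
            have h2'' : P' n * εγ ≤ γ ^ n * εγ :=
              mul_le_mul_of_nonneg_right (hP'le n) hεγ
            linarith
        _ = εγ * D (n + 1) := by rw [← hDsucc n]; ring
  -- summabilities
  have hgeo : Summable (fun k : ℕ => γ ^ k) := summable_geometric_of_lt_one hγ0 hγ1
  have hSvP : Summable (fun k : ℕ => v k * P k) := by
    apply Summable.of_nonneg_of_le (fun k => mul_nonneg (hv0 k) (hP0 k))
      (fun k => mul_le_mul (hv1 k) (hPle k) (hP0 k) (by positivity))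
    exact (hgeo.mul_left _)
  have hSv'P' : Summable (fun k : ℕ => v' k * P' k) := by
    apply Summable.of_nonneg_of_le (fun k => mul_nonneg (hv'0 k) (hP'0 k))
      (fun k => mul_le_mul (hv'1 k) (hP'le k) (hP'0 k) (by positivity))
    exact (hgeo.mul_left _)
  have hSD : Summable D := by
    rw [← summable_nat_add_iff 1]
    have : (fun n : ℕ => D (n + 1)) = fun n : ℕ => (n : ℝ) * γ ^ n + γ ^ n := by
      funext n
      simp only [hDdef, Nat.add_sub_cancel]
      push_cast; ring
    rw [this]
    have h1 : Summable (fun n : ℕ => (n : ℝ) * γ ^ n) := by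
      have := summable_pow_mul_geometric_of_norm_lt_one 1 (r := γ)
        (by rw [Real.norm_eq_abs, abs_of_nonneg hγ0]; exact hγ1)
      simpa using this
    exact h1.add hgeo
  have hDsum : ∑' k, D k = 1 / (1 - γ) ^ 2 := by
    rw [Summable.tsum_eq_zero_add hSD]
    have e : (fun n : ℕ => D (n + 1)) = fun n : ℕ => (n : ℝ) * γ ^ n + γ ^ n := by
      funext n
      simp only [hDdef, Nat.add_sub_cancel]
      push_cast; ring
    have h1 : Summable (fun n : ℕ => (n : ℝ) * γ ^ n) := by
      have := summable_pow_mul_geometric_of_norm_lt_one 1 (r := γ)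
        (by rw [Real.norm_eq_abs, abs_of_nonneg hγ0]; exact hγ1)
      simpa using this
    rw [e, Summable.tsum_add h1 hgeo,
      tsum_coe_mul_geometric_of_norm_lt_one
        (by rw [Real.norm_eq_abs, abs_of_nonneg hγ0]; exact hγ1),
      tsum_geometric_of_lt_one hγ0 hγ1]
    have hD0' : D 0 = 0 := by simp [hDdef]
    rw [hD0']
    field_simp
    ring
  -- bound function
  set Bd : ℕ → ℝ := fun k => εv * vmax * γ ^ k + vmax * (1 - γ) * (εγ * D k) with hBdef
  have hSB : Summable Bd := ((hgeo.mul_left _).add ((hSD.mul_left εγ).mul_left _))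
  have hterm : ∀ k, v k * P k ≤ v' k * P' k + Bd k := by
    intro k
    have e : v k * P k - v' k * P' k = (v k - v' k) * P k + v' k * (P k - P' k) := by ring
    have h1 : (v k - v' k) * P k ≤ εv * vmax * γ ^ k :=
      mul_le_mul (hvdiff k) (hPle k) (hP0 k) (mul_nonneg hεv hvmax)
    have h2 : v' k * (P k - P' k) ≤ vmax * (1 - γ) * (εγ * D k) :=
      mul_le_mul (hv'1 k) (hkey k) (by linarith [hP'P k]) (by positivity)
    simp only [hBdef]
    linarith [e.le, e.ge]
  -- combine
  have hA : (∑' k, v k * P k) ≤ (∑' k, v' k * P' k) + ∑' k, Bd k := by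
    rw [← Summable.tsum_add hSv'P' hSB]
    exact Summable.tsum_le_tsum hterm hSvP (hSv'P'.add hSB)
  have hA' : (∑' k, v' k * P' k) ≤ ∑' k, vh k * ∏ i ∈ Finset.range k, gh i := by
    apply Summable.tsum_le_tsum _ hSv'P' hsum
    intro k
    exact mul_le_mul (hv'vh k)
      (Finset.prod_le_prod (fun i _ => hg'0 i) (fun i _ => hg'gh i)) (hP'0 k) (hvh0 k)
  have hBsum : ∑' k, Bd k = εv * vmax / (1 - γ) + vmax * εγ / (1 - γ) := by
    simp only [hBdef]
    rw [Summable.tsum_add (hgeo.mul_left _) ((hSD.mul_left εγ).mul_left _),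
      tsum_mul_left, tsum_mul_left, tsum_mul_left,
      tsum_geometric_of_lt_one hγ0 hγ1, hDsum]
    field_simp
  have hfin : vmax * εγ / (1 - γ) ≤ εγ * vmax / (1 - γ) ^ 2 := by
    rw [div_le_div_iff₀ h1γ (by positivity)]
    have h2 : (1 - γ) ^ 2 ≤ 1 - γ := by nlinarith
    nlinarith [mul_nonneg hεγ hvmax]
  have := hA.trans (by linarith : (∑' k, v' k * P' k) + ∑' k, Bd k ≤
    (∑' k, vh k * ∏ i ∈ Finset.range k, gh i) + (εv * vmax / (1 - γ) + vmax * εγ / (1 - γ)))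
  linarith
end
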